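/- Let k ≥ 2 be an integer and i an integer with 0 ≤ i ≤ 2k, and let F(z) = φ^{4k−2i}(z) φ^{2i}(3z). Then F vanishes at the cusps 1/2 and 1/6: the limit as Im(z) → ∞ of (2z+1)^{−2k} F(z/(2z+1)) equals 0, and the limit as Im(z) → ∞ of (6z+1)^{−2k} F(z/(6z+1)) equals 0. -/

import Mathlib

open Complex UpperHalfPlane Filter

/-- Ramanujan's theta function `φ(z) = ∑_{n ∈ ℤ} q^{n²}`. -/
noncomputable def phi (z : ℂ) : ℂ :=
  ∑' n : ℤ, Complex.exp (2 * Real.pi * Complex.I * (n : ℂ) ^ 2 * z)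

namespace PhiCusp

open Real

lemma jt2_add_one_right (z τ : ℂ) : jacobiTheta₂ z (τ + 1) = jacobiTheta₂ (z + 1/2) τ := by
  refine tsum_congr fun n => ?_
  unfold jacobiTheta₂_term
  rw [Complex.exp_eq_exp_iff_exists_int]
  have h : Even (n ^ 2 - n) := by
    rcases Int.even_or_odd n with h | h
    · exact (Int.even_pow.mpr ⟨h, two_ne_zero⟩).sub h
    · exact (Int.odd_pow.mpr (by simp [h])).sub_odd h
  obtain ⟨m, hm⟩ := h
  refine ⟨m, ?_⟩
  have hm' : (n : ℂ) ^ 2 - n = m + m := by exact_mod_cast hm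
  linear_combination (π : ℂ) * Complex.I * hm'

lemma cpow_half_ne_zero {b : ℂ} (hb : b ≠ 0) : b ^ (1/2 : ℂ) ≠ 0 := by
  simp [Complex.cpow_eq_zero_iff, hb]

lemma L1 {σ : ℂ} (hσ : σ + 1 ≠ 0) :
    jacobiTheta₂ 0 (σ / (σ + 1)) =
      (-Complex.I * (σ + 1)) ^ (1/2 : ℂ) * Complex.exp (π * Complex.I * (σ + 1) / 4) *
        jacobiTheta₂ ((σ + 1) / 2) (σ + 1) := by
  have h0 : (-Complex.I * (σ + 1)) ≠ 0 := by
    simp [Complex.I_ne_zero, hσ]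
  have hfe := jacobiTheta₂_functional_equation ((σ + 1) / 2) (σ + 1)
  have h1 : ((σ + 1) / 2) / (σ + 1) = 1/2 := by
    rw [div_div, mul_comm, ← div_div, div_self hσ]
  have h2 : -π * Complex.I * ((σ + 1) / 2) ^ 2 / (σ + 1) = -(π * Complex.I * (σ + 1) / 4) := by
    field_simp; ring
  have h3 : jacobiTheta₂ (1/2 : ℂ) (-1 / (σ + 1)) = jacobiTheta₂ 0 (σ / (σ + 1)) := by
    have : (σ / (σ + 1)) = (-1 / (σ + 1)) + 1 := by field_simp; ring
    rw [this, jt2_add_one_right]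
    norm_num
  rw [h1, h2, h3] at hfe
  rw [hfe]
  field_simp [cpow_half_ne_zero h0]
  rw [mul_assoc, ← Complex.exp_add, add_neg_cancel, Complex.exp_zero, mul_one]

lemma L2 {σ : ℂ} (hσ : σ + 1 ≠ 0) :
    jacobiTheta₂ 0 (3 * σ / (σ + 1)) =
      (-Complex.I * ((σ + 1) / 3)) ^ (1/2 : ℂ) * Complex.exp (π * Complex.I * (σ + 1) / 12) *
        jacobiTheta₂ ((σ + 1) / 6) ((σ + 1) / 3) := by
  have h0 : (-Complex.I * ((σ + 1) / 3)) ≠ 0 := by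
    simp [Complex.I_ne_zero, hσ]
  have hfe := jacobiTheta₂_functional_equation ((σ + 1) / 6) ((σ + 1) / 3)
  have h1 : ((σ + 1) / 6) / ((σ + 1) / 3) = 1/2 := by
    field_simp
    ring
  have h2 : -π * Complex.I * ((σ + 1) / 6) ^ 2 / ((σ + 1) / 3) = -(π * Complex.I * (σ + 1) / 12) := by
    field_simp; ring
  have h4 : -1 / ((σ + 1) / 3) = -3 / (σ + 1) := by
    field_simp
  have h3 : jacobiTheta₂ (1/2 : ℂ) (-3 / (σ + 1)) = jacobiTheta₂ 0 (3 * σ / (σ + 1)) := by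
    have e1 : (3 * σ / (σ + 1)) = ((-3 / (σ + 1)) + 1) + 2 := by field_simp; ring
    rw [e1, jacobiTheta₂_add_right, jt2_add_one_right]
    norm_num
  rw [h1, h2, h4, h3] at hfe
  rw [hfe, Complex.exp_neg]
  field_simp [cpow_half_ne_zero h0]

lemma L3 {σ : ℂ} (hσ : σ ≠ 0) :
    jacobiTheta₂ 0 (σ / (3 * σ + 1)) =
      1 / (-Complex.I * (σ / (3 * σ + 1))) ^ (1/2 : ℂ) *
        ((-Complex.I * σ) ^ (1/2 : ℂ) * Complex.exp (π * Complex.I * σ / 4) *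
          jacobiTheta₂ (σ / 2) σ) := by
  have h0 : (-Complex.I * σ) ≠ 0 := by simp [Complex.I_ne_zero, hσ]
  have hfe1 := jacobiTheta₂_functional_equation 0 (σ / (3 * σ + 1))
  have e1 : -π * Complex.I * (0:ℂ) ^ 2 / (σ / (3 * σ + 1)) = 0 := by simp
  have e2 : (0:ℂ) / (σ / (3 * σ + 1)) = 0 := by simp
  have e3 : -1 / (σ / (3 * σ + 1)) = (-1/σ - 4) + 1 := by field_simp; ring
  rw [e1, e2, e3, Complex.exp_zero, mul_one, jt2_add_one_right] at hfe1
  have hfe2 := jacobiTheta₂_functional_equation (σ / 2) σ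
  have f1 : (σ / 2) / σ = 1/2 := by rw [div_div, mul_comm, ← div_div, div_self hσ]
  have f2 : -π * Complex.I * (σ / 2) ^ 2 / σ = -(π * Complex.I * σ / 4) := by field_simp; ring
  rw [f1, f2] at hfe2
  have key : jacobiTheta₂ (0 + 1/2 : ℂ) (-1/σ - 4) =
      (-Complex.I * σ) ^ (1/2 : ℂ) * Complex.exp (π * Complex.I * σ / 4) *
        jacobiTheta₂ (σ / 2) σ := by
    have e4 : (-1/σ : ℂ) = ((-1/σ - 4) + 2) + 2 := by ring
    rw [show ((0:ℂ) + 1/2) = (1/2 : ℂ) by norm_num]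
    rw [hfe2, Complex.exp_neg, e4, jacobiTheta₂_add_right, jacobiTheta₂_add_right]
    field_simp [cpow_half_ne_zero h0]
    ring
  rw [hfe1, key]

noncomputable def Cbound : ℝ := ∑' n : ℤ, rexp (-π * ((n:ℝ)^2 - |(n:ℝ)|))

lemma Cbound_summable : Summable (fun n : ℤ => rexp (-π * ((n:ℝ)^2 - |(n:ℝ)|))) := by
  have := summable_pow_mul_jacobiTheta₂_term_bound (1/2) one_pos 0
  simpa using this

lemma Cbound_nonneg : 0 ≤ Cbound := tsum_nonneg fun _ => (Real.exp_pos _).le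

lemma g_bound {σ : ℂ} (hσ : 1 ≤ σ.im) : ‖jacobiTheta₂ (σ/2) σ‖ ≤ Cbound := by
  refine tsum_of_norm_bounded Cbound_summable.hasSum fun n => ?_
  rw [norm_jacobiTheta₂_term]
  have him : (σ/2).im = σ.im/2 := by
    simp [Complex.div_im, Complex.normSq_apply]
  rw [him, Real.exp_le_exp]
  have hz : 0 ≤ n^2 + n := by
    rcases le_or_gt 0 n with h | h
    · nlinarith
    · have hn : n ≤ -1 := by omega
      nlinarith
  have h1 : 0 ≤ (n:ℝ)^2 + n := by exact_mod_cast hz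
  have h2 : -|(n:ℝ)| ≤ (n:ℝ) := neg_abs_le _
  nlinarith [Real.pi_pos, mul_nonneg (sub_nonneg.mpr hσ) h1,
    mul_le_mul_of_nonneg_left (neg_abs_le (n:ℝ)) Real.pi_pos.le,
    mul_nonneg Real.pi_pos.le h1]

lemma phi_eq (u : ℂ) : phi u = jacobiTheta₂ 0 (2 * u) := by
  refine tsum_congr fun n => ?_
  unfold jacobiTheta₂_term
  congr 1
  ring

lemma norm_cpow_half (w : ℂ) : ‖w ^ (1/2:ℂ)‖ = ‖w‖ ^ (1/2:ℝ) := by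
  rw [show (1/2 : ℂ) = ((1/2:ℝ):ℂ) by norm_num, Complex.norm_cpow_real]

lemma re4 (w : ℂ) : ((π:ℂ) * Complex.I * w / 4).re = -(π * w.im) / 4 := by
  have h : (π:ℂ) * Complex.I * w / 4 = ((π/4 : ℝ):ℂ) * (w * Complex.I) := by
    push_cast; ring
  rw [h, Complex.re_ofReal_mul, Complex.mul_I_re]; ring

lemma re12 (w : ℂ) : ((π:ℂ) * Complex.I * w / 12).re = -(π * w.im) / 12 := by
  have h : (π:ℂ) * Complex.I * w / 12 = ((π/12 : ℝ):ℂ) * (w * Complex.I) := by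
    push_cast; ring
  rw [h, Complex.re_ofReal_mul, Complex.mul_I_re]; ring

lemma assemble {A e₁ e₂ p₁ p₂ : ℝ} (a b k : ℕ) (hab : a + b = 4*k)
    (hA : 1 ≤ A) (hp₁ : 0 ≤ p₁) (hp₂ : 0 ≤ p₂) (he₁ : 0 ≤ e₁) (he₂ : 0 ≤ e₂)
    (h₁ : p₁ ≤ A ^ (1/2:ℝ) * e₁) (h₂ : p₂ ≤ A ^ (1/2:ℝ) * e₂) :
    (A ^ (2*k))⁻¹ * (p₁ ^ a * p₂ ^ b) ≤ e₁ ^ a * e₂ ^ b := by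
  have hA0 : (0:ℝ) < A := lt_of_lt_of_le one_pos hA
  have hAr : (0:ℝ) ≤ A ^ (1/2:ℝ) := Real.rpow_nonneg hA0.le _
  have step : p₁ ^ a * p₂ ^ b ≤ (A ^ (1/2:ℝ) * e₁) ^ a * (A ^ (1/2:ℝ) * e₂) ^ b :=
    mul_le_mul (pow_le_pow_left₀ hp₁ h₁ a) (pow_le_pow_left₀ hp₂ h₂ b)
      (pow_nonneg hp₂ b) (pow_nonneg (by positivity) a)
  have hsq : (A ^ (1/2:ℝ)) ^ 2 = A := by
    rw [← Real.rpow_natCast (A ^ (1/2:ℝ)) 2, ← Real.rpow_mul hA0.le]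
    norm_num
  have hpow : (A ^ (1/2:ℝ)) ^ a * (A ^ (1/2:ℝ)) ^ b = A ^ (2*k) := by
    rw [← pow_add, hab, show 4*k = 2*(2*k) by ring, pow_mul, hsq]
  calc (A ^ (2*k))⁻¹ * (p₁ ^ a * p₂ ^ b)
      ≤ (A ^ (2*k))⁻¹ * ((A ^ (1/2:ℝ) * e₁) ^ a * (A ^ (1/2:ℝ) * e₂) ^ b) :=
        mul_le_mul_of_nonneg_left step (by positivity)
    _ = (A ^ (2*k))⁻¹ * (A ^ (2*k)) * (e₁ ^ a * e₂ ^ b) := by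
        rw [mul_pow, mul_pow, ← hpow]; ring
    _ = e₁ ^ a * e₂ ^ b := by
        rw [inv_mul_cancel₀ (by positivity), one_mul]

lemma exp_side (a b k : ℕ) (hab : a + b = 4*k) (hk : 2 ≤ k) {t c₁ c₂ C : ℝ}
    (ht : 0 ≤ t) (hC : 0 ≤ C) (h₁ : 1/6 ≤ c₁) (h₂ : 1/6 ≤ c₂) :
    (rexp (-(π * t * c₁)) * C) ^ a * (rexp (-(π * t * c₂)) * C) ^ b ≤
      C ^ (4*k) * rexp (-π * t) := by
  have habR : (a:ℝ) + b = 4 * k := by exact_mod_cast hab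
  have hkR : (2:ℝ) ≤ k := by exact_mod_cast hk
  have ha0 : (0:ℝ) ≤ a := Nat.cast_nonneg a
  have hb0 : (0:ℝ) ≤ b := Nat.cast_nonneg b
  have hπt : (0:ℝ) ≤ π * t := mul_nonneg Real.pi_pos.le ht
  rw [mul_pow, mul_pow, ← Real.exp_nat_mul, ← Real.exp_nat_mul]
  rw [show rexp ((a:ℕ) * -(π * t * c₁)) * C ^ a * (rexp ((b:ℕ) * -(π * t * c₂)) * C ^ b)
      = (rexp ((a:ℕ) * -(π * t * c₁)) * rexp ((b:ℕ) * -(π * t * c₂))) * (C ^ a * C ^ b) by ring,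
    ← Real.exp_add, ← pow_add, hab]
  rw [mul_comm]
  refine mul_le_mul_of_nonneg_left ?_ (pow_nonneg hC _)
  rw [Real.exp_le_exp]
  have key : 1 ≤ (a:ℝ) * c₁ + (b:ℝ) * c₂ := by
    have t1 : (a:ℝ) * (1/6) ≤ (a:ℝ) * c₁ := mul_le_mul_of_nonneg_left h₁ ha0
    have t2 : (b:ℝ) * (1/6) ≤ (b:ℝ) * c₂ := mul_le_mul_of_nonneg_left h₂ hb0
    nlinarith
  nlinarith [mul_le_mul_of_nonneg_left key hπt]

lemma helper_div {X Y E T C : ℝ} (hX : 0 < X) (hY : 0 ≤ Y) (hE : 0 ≤ E) (hT : T ≤ C) :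
    1 / (X / Y) * (X * E * T) ≤ Y * (E * C) := by
  have heq : 1 / (X / Y) * (X * E * T) = Y * (E * T) := by
    field_simp
  rw [heq]
  exact mul_le_mul_of_nonneg_left (mul_le_mul_of_nonneg_left hT hE) hY

lemma tendsto_bound (c : ℝ) :
    Filter.Tendsto (fun z : UpperHalfPlane => c * rexp (-π * UpperHalfPlane.im z))
      UpperHalfPlane.atImInfty (nhds 0) := by
  have h0 : Filter.Tendsto UpperHalfPlane.im UpperHalfPlane.atImInfty atTop := tendsto_comap
  have h1 : Filter.Tendsto (fun z : UpperHalfPlane => π * UpperHalfPlane.im z)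
      UpperHalfPlane.atImInfty atTop := h0.const_mul_atTop Real.pi_pos
  have h2 : Filter.Tendsto (fun z : UpperHalfPlane => -(π * UpperHalfPlane.im z))
      UpperHalfPlane.atImInfty atBot := tendsto_neg_atTop_atBot.comp h1
  have h3 := (Real.tendsto_exp_atBot).comp h2
  have h4 : Filter.Tendsto (fun z : UpperHalfPlane => rexp (-π * UpperHalfPlane.im z))
      UpperHalfPlane.atImInfty (nhds 0) := by
    simpa [Function.comp_def, neg_mul] using h3
  simpa using h4.const_mul c

end PhiCusp

open PhiCusp Real

/-- `F(z) = φ^{4k−2i}(z) φ^{2i}(3z)` vanishes at the cusps `1/2` and `1/6`. -/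
theorem phi_pow_vanishes_at_cusps (k i : ℕ) (hk : 2 ≤ k) (hi : i ≤ 2 * k) :
    Filter.Tendsto (fun z : UpperHalfPlane =>
        (((2 : ℂ) * (z : ℂ) + 1) ^ (2 * k))⁻¹ *
          (phi ((z : ℂ) / ((2 : ℂ) * (z : ℂ) + 1)) ^ (4 * k - 2 * i) *
            phi (3 * ((z : ℂ) / ((2 : ℂ) * (z : ℂ) + 1))) ^ (2 * i)))
      UpperHalfPlane.atImInfty (nhds 0) ∧
    Filter.Tendsto (fun z : UpperHalfPlane =>
        (((6 : ℂ) * (z : ℂ) + 1) ^ (2 * k))⁻¹ *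
          (phi ((z : ℂ) / ((6 : ℂ) * (z : ℂ) + 1)) ^ (4 * k - 2 * i) *
            phi (3 * ((z : ℂ) / ((6 : ℂ) * (z : ℂ) + 1))) ^ (2 * i)))
      UpperHalfPlane.atImInfty (nhds 0) := by
  have hev : ∀ᶠ z : UpperHalfPlane in UpperHalfPlane.atImInfty, 3 ≤ UpperHalfPlane.im z := by
    simp only [Filter.Eventually, UpperHalfPlane.atImInfty_mem]
    exact ⟨3, fun z h => h⟩
  have hab : (4*k - 2*i) + 2*i = 4*k := by omega
  constructor
  · refine squeeze_zero_norm' ?_ (tendsto_bound (Cbound ^ (4*k)))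
    filter_upwards [hev] with z hz
    have him2 : ((2:ℂ) * (z:ℂ) + 1).im = 2 * UpperHalfPlane.im z := by
      simp [Complex.add_im, Complex.mul_im]
    have hne : (2:ℂ) * (z:ℂ) + 1 ≠ 0 := by
      intro h
      rw [h] at him2
      simp at him2
      linarith
    have hA : 1 ≤ ‖(2:ℂ) * (z:ℂ) + 1‖ := by
      calc (1:ℝ) ≤ 2 * UpperHalfPlane.im z := by linarith
        _ = |((2:ℂ) * (z:ℂ) + 1).im| := by
            rw [him2, _root_.abs_of_nonneg (by linarith : (0:ℝ) ≤ 2 * UpperHalfPlane.im z)]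
        _ ≤ ‖(2:ℂ) * (z:ℂ) + 1‖ := Complex.abs_im_le_norm _
    have hP1 : phi ((z:ℂ) / ((2:ℂ) * (z:ℂ) + 1)) =
        (-Complex.I * (2 * (z:ℂ) + 1)) ^ (1/2:ℂ) *
          Complex.exp ((π:ℂ) * Complex.I * (2 * (z:ℂ) + 1) / 4) *
          jacobiTheta₂ ((2 * (z:ℂ) + 1) / 2) (2 * (z:ℂ) + 1) := by
      rw [phi_eq, show (2:ℂ) * ((z:ℂ) / ((2:ℂ) * (z:ℂ) + 1))
          = (2 * (z:ℂ)) / (2 * (z:ℂ) + 1) from (mul_div_assoc _ _ _).symm]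
      exact L1 hne
    have hP2 : phi (3 * ((z:ℂ) / ((2:ℂ) * (z:ℂ) + 1))) =
        (-Complex.I * ((2 * (z:ℂ) + 1) / 3)) ^ (1/2:ℂ) *
          Complex.exp ((π:ℂ) * Complex.I * (2 * (z:ℂ) + 1) / 12) *
          jacobiTheta₂ ((2 * (z:ℂ) + 1) / 6) ((2 * (z:ℂ) + 1) / 3) := by
      rw [phi_eq, show (2:ℂ) * (3 * ((z:ℂ) / ((2:ℂ) * (z:ℂ) + 1)))
          = 3 * (2 * (z:ℂ)) / (2 * (z:ℂ) + 1) by ring]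
      exact L2 hne
    have hg1 : ‖jacobiTheta₂ ((2 * (z:ℂ) + 1) / 2) (2 * (z:ℂ) + 1)‖ ≤ Cbound :=
      g_bound (by rw [him2]; linarith)
    have hg2 : ‖jacobiTheta₂ ((2 * (z:ℂ) + 1) / 6) ((2 * (z:ℂ) + 1) / 3)‖ ≤ Cbound := by
      have e : ((2 * (z:ℂ) + 1) / 3) / 2 = (2 * (z:ℂ) + 1) / 6 := by ring
      rw [← e]
      refine g_bound ?_
      have : ((2 * (z:ℂ) + 1) / 3).im = (2 * UpperHalfPlane.im z) / 3 := by
        rw [← him2]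
        simp [Complex.div_im, Complex.normSq_apply]
      rw [this]
      linarith
    have hn1 : ‖phi ((z:ℂ) / ((2:ℂ) * (z:ℂ) + 1))‖ ≤
        ‖(2:ℂ) * (z:ℂ) + 1‖ ^ (1/2:ℝ) *
          (rexp (-(π * UpperHalfPlane.im z * (1/2))) * Cbound) := by
      rw [hP1, norm_mul, norm_mul, norm_cpow_half,
        show ‖-Complex.I * (2 * (z:ℂ) + 1)‖ = ‖(2:ℂ) * (z:ℂ) + 1‖ by
          simp,
        Complex.norm_exp, re4, him2,
        show -(π * (2 * UpperHalfPlane.im z)) / 4 = -(π * UpperHalfPlane.im z * (1/2)) by ring,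
        mul_assoc]
      exact mul_le_mul_of_nonneg_left
        (mul_le_mul_of_nonneg_left hg1 (Real.exp_pos _).le)
        (Real.rpow_nonneg (norm_nonneg _) _)
    have hn2 : ‖phi (3 * ((z:ℂ) / ((2:ℂ) * (z:ℂ) + 1)))‖ ≤
        ‖(2:ℂ) * (z:ℂ) + 1‖ ^ (1/2:ℝ) *
          (rexp (-(π * UpperHalfPlane.im z * (1/6))) * Cbound) := by
      rw [hP2, norm_mul, norm_mul, norm_cpow_half,
        Complex.norm_exp, re12, him2,
        show -(π * (2 * UpperHalfPlane.im z)) / 12 = -(π * UpperHalfPlane.im z * (1/6)) by ring,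
        mul_assoc]
      refine mul_le_mul ?_ (mul_le_mul_of_nonneg_left hg2 (Real.exp_pos _).le) (by positivity)
        (Real.rpow_nonneg (norm_nonneg _) _)
      refine Real.rpow_le_rpow (norm_nonneg _) ?_ (by norm_num)
      rw [norm_mul, norm_div]
      simp only [norm_neg, Complex.norm_I, one_mul]
      have := norm_nonneg ((2:ℂ) * (z:ℂ) + 1)
      rw [show ‖2 * (z:ℂ) + 1‖ / ‖(3:ℂ)‖
          = ‖2 * (z:ℂ) + 1‖ / 3 by norm_num]
      linarith [norm_nonneg (2 * (z:ℂ) + 1)]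
    have hfz : ‖(((2:ℂ) * (z:ℂ) + 1) ^ (2*k))⁻¹ *
        (phi ((z:ℂ) / ((2:ℂ) * (z:ℂ) + 1)) ^ (4*k - 2*i) *
          phi (3 * ((z:ℂ) / ((2:ℂ) * (z:ℂ) + 1))) ^ (2*i))‖
        = (‖(2:ℂ) * (z:ℂ) + 1‖ ^ (2*k))⁻¹ *
          (‖phi ((z:ℂ) / ((2:ℂ) * (z:ℂ) + 1))‖ ^ (4*k - 2*i) *
            ‖phi (3 * ((z:ℂ) / ((2:ℂ) * (z:ℂ) + 1)))‖ ^ (2*i)) := by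
      rw [norm_mul, norm_inv, norm_pow, norm_mul, norm_pow, norm_pow]
    rw [hfz]
    calc (‖(2:ℂ) * (z:ℂ) + 1‖ ^ (2*k))⁻¹ *
          (‖phi ((z:ℂ) / ((2:ℂ) * (z:ℂ) + 1))‖ ^ (4*k - 2*i) *
            ‖phi (3 * ((z:ℂ) / ((2:ℂ) * (z:ℂ) + 1)))‖ ^ (2*i))
        ≤ (rexp (-(π * UpperHalfPlane.im z * (1/2))) * Cbound) ^ (4*k - 2*i) *
            (rexp (-(π * UpperHalfPlane.im z * (1/6))) * Cbound) ^ (2*i) :=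
          assemble _ _ k hab hA (norm_nonneg _) (norm_nonneg _)
            (mul_nonneg (Real.exp_pos _).le Cbound_nonneg)
            (mul_nonneg (Real.exp_pos _).le Cbound_nonneg) hn1 hn2
      _ ≤ Cbound ^ (4*k) * rexp (-π * UpperHalfPlane.im z) :=
          exp_side _ _ k hab hk (by linarith) Cbound_nonneg (by norm_num) (by norm_num)
  · refine squeeze_zero_norm' ?_ (tendsto_bound (Cbound ^ (4*k)))
    filter_upwards [hev] with z hz
    have him6 : ((6:ℂ) * (z:ℂ) + 1).im = 6 * UpperHalfPlane.im z := by
      simp [Complex.add_im, Complex.mul_im]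
    have him2 : ((2:ℂ) * (z:ℂ)).im = 2 * UpperHalfPlane.im z := by
      simp [Complex.mul_im]
    have hne : (6:ℂ) * (z:ℂ) + 1 ≠ 0 := by
      intro h
      rw [h] at him6
      simp at him6
      linarith
    have hσne : (2:ℂ) * (z:ℂ) ≠ 0 := by
      intro h
      rw [h] at him2
      simp at him2
      linarith
    have hA : 1 ≤ ‖(6:ℂ) * (z:ℂ) + 1‖ := by
      calc (1:ℝ) ≤ 6 * UpperHalfPlane.im z := by linarith
        _ = |((6:ℂ) * (z:ℂ) + 1).im| := by
            rw [him6, _root_.abs_of_nonneg (by linarith : (0:ℝ) ≤ 6 * UpperHalfPlane.im z)]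
        _ ≤ ‖(6:ℂ) * (z:ℂ) + 1‖ := Complex.abs_im_le_norm _
    -- P1 via L3 with σ = 2z, 3σ+1 = 6z+1
    have key3 := L3 hσne
    rw [show (3:ℂ) * (2 * (z:ℂ)) + 1 = 6 * (z:ℂ) + 1 by ring] at key3
    have hP1 : phi ((z:ℂ) / ((6:ℂ) * (z:ℂ) + 1)) =
        1 / (-Complex.I * ((2 * (z:ℂ)) / (6 * (z:ℂ) + 1))) ^ (1/2:ℂ) *
          ((-Complex.I * (2 * (z:ℂ))) ^ (1/2:ℂ) *
            Complex.exp ((π:ℂ) * Complex.I * (2 * (z:ℂ)) / 4) *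
            jacobiTheta₂ ((2 * (z:ℂ)) / 2) (2 * (z:ℂ))) := by
      rw [phi_eq, show (2:ℂ) * ((z:ℂ) / ((6:ℂ) * (z:ℂ) + 1))
          = (2 * (z:ℂ)) / (6 * (z:ℂ) + 1) from (mul_div_assoc _ _ _).symm]
      exact key3
    -- P2 via L1 with σ = 6z
    have hP2 : phi (3 * ((z:ℂ) / ((6:ℂ) * (z:ℂ) + 1))) =
        (-Complex.I * (6 * (z:ℂ) + 1)) ^ (1/2:ℂ) *
          Complex.exp ((π:ℂ) * Complex.I * (6 * (z:ℂ) + 1) / 4) *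
          jacobiTheta₂ ((6 * (z:ℂ) + 1) / 2) (6 * (z:ℂ) + 1) := by
      rw [phi_eq, show (2:ℂ) * (3 * ((z:ℂ) / ((6:ℂ) * (z:ℂ) + 1)))
          = 6 * (z:ℂ) / (6 * (z:ℂ) + 1) by ring]
      exact L1 hne
    have hg1 : ‖jacobiTheta₂ ((2 * (z:ℂ)) / 2) (2 * (z:ℂ))‖ ≤ Cbound :=
      g_bound (by rw [him2]; linarith)
    have hg2 : ‖jacobiTheta₂ ((6 * (z:ℂ) + 1) / 2) (6 * (z:ℂ) + 1)‖ ≤ Cbound :=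
      g_bound (by rw [him6]; linarith)
    have hn1 : ‖phi ((z:ℂ) / ((6:ℂ) * (z:ℂ) + 1))‖ ≤
        ‖(6:ℂ) * (z:ℂ) + 1‖ ^ (1/2:ℝ) *
          (rexp (-(π * UpperHalfPlane.im z * (1/2))) * Cbound) := by
      have habs1 : ‖-Complex.I * ((2 * (z:ℂ)) / (6 * (z:ℂ) + 1))‖
          = ‖2 * (z:ℂ)‖ / ‖6 * (z:ℂ) + 1‖ := by
        rw [norm_mul, norm_div]
        simp
      have habs2 : ‖-Complex.I * (2 * (z:ℂ))‖ = ‖2 * (z:ℂ)‖ := by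
        simp
      have hx : (0:ℝ) < ‖2 * (z:ℂ)‖ := by
        rw [norm_pos_iff]
        exact hσne
      have hy : (0:ℝ) < ‖6 * (z:ℂ) + 1‖ := by
        rw [norm_pos_iff]
        exact hne
      rw [hP1, norm_mul, norm_div, norm_one, norm_mul, norm_mul, norm_cpow_half, norm_cpow_half,
        Complex.norm_exp, re4, him2,
        show -(π * (2 * UpperHalfPlane.im z)) / 4 = -(π * UpperHalfPlane.im z * (1/2)) by ring,
        habs1, habs2, Real.div_rpow hx.le hy.le]
      exact helper_div (Real.rpow_pos_of_pos hx _) (Real.rpow_nonneg hy.le _)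
        (Real.exp_pos _).le hg1
    have hn2 : ‖phi (3 * ((z:ℂ) / ((6:ℂ) * (z:ℂ) + 1)))‖ ≤
        ‖(6:ℂ) * (z:ℂ) + 1‖ ^ (1/2:ℝ) *
          (rexp (-(π * UpperHalfPlane.im z * (3/2))) * Cbound) := by
      rw [hP2, norm_mul, norm_mul, norm_cpow_half,
        show ‖-Complex.I * (6 * (z:ℂ) + 1)‖ = ‖(6:ℂ) * (z:ℂ) + 1‖ by
          simp,
        Complex.norm_exp, re4, him6,
        show -(π * (6 * UpperHalfPlane.im z)) / 4 = -(π * UpperHalfPlane.im z * (3/2)) by ring,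
        mul_assoc]
      exact mul_le_mul_of_nonneg_left
        (mul_le_mul_of_nonneg_left hg2 (Real.exp_pos _).le)
        (Real.rpow_nonneg (norm_nonneg _) _)
    have hfz : ‖(((6:ℂ) * (z:ℂ) + 1) ^ (2*k))⁻¹ *
        (phi ((z:ℂ) / ((6:ℂ) * (z:ℂ) + 1)) ^ (4*k - 2*i) *
          phi (3 * ((z:ℂ) / ((6:ℂ) * (z:ℂ) + 1))) ^ (2*i))‖
        = (‖(6:ℂ) * (z:ℂ) + 1‖ ^ (2*k))⁻¹ *
          (‖phi ((z:ℂ) / ((6:ℂ) * (z:ℂ) + 1))‖ ^ (4*k - 2*i) *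
            ‖phi (3 * ((z:ℂ) / ((6:ℂ) * (z:ℂ) + 1)))‖ ^ (2*i)) := by
      rw [norm_mul, norm_inv, norm_pow, norm_mul, norm_pow, norm_pow]
    rw [hfz]
    calc (‖(6:ℂ) * (z:ℂ) + 1‖ ^ (2*k))⁻¹ *
          (‖phi ((z:ℂ) / ((6:ℂ) * (z:ℂ) + 1))‖ ^ (4*k - 2*i) *
            ‖phi (3 * ((z:ℂ) / ((6:ℂ) * (z:ℂ) + 1)))‖ ^ (2*i))
        ≤ (rexp (-(π * UpperHalfPlane.im z * (1/2))) * Cbound) ^ (4*k - 2*i) *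
            (rexp (-(π * UpperHalfPlane.im z * (3/2))) * Cbound) ^ (2*i) :=
          assemble _ _ k hab hA (norm_nonneg _) (norm_nonneg _)
            (mul_nonneg (Real.exp_pos _).le Cbound_nonneg)
            (mul_nonneg (Real.exp_pos _).le Cbound_nonneg) hn1 hn2
      _ ≤ Cbound ^ (4*k) * rexp (-π * UpperHalfPlane.im z) :=
          exp_side _ _ k hab hk (by linarith) Cbound_nonneg (by norm_num) (by norm_num)
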